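/- For every ℓ ∈ ℕ₊, m ∈ ℕ and t ∈ ℕ₊ and every tuple (k₁,…,k_t) ∈ ℕ₊ᵗ, the (ℓ,(k₁,…,k_t),m)-Ramsey number is finite: there exists n such that for every structure H consisting of t uniform hypergraphs (the i-th of arity k_i) on a common vertex set, and every f : V(H) → [ℓ] with all fibers of size at least n, there exist sets Q_i of weak compositions of k_i of length ℓ (for each i ∈ [t]) and W ⊆ V(H) with all fibers of f|_W of size at least m, such that for each i and each k_i-element subset e ⊆ W, e is an E_i-edge of H iff (|e ∩ f⁻¹(j)|)_j ∈ Q_i. -/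

import Mathlib

open Classical in
theorem myRamsey (K r m : ℕ) : ∃ n : ℕ, ∀ (γ : Type) [Fintype γ], Fintype.card γ ≤ r →
    ∀ (α : Type) [DecidableEq α] (S : Finset α) (χ : Finset α → γ), n ≤ S.card →
    ∃ W : Finset α, W ⊆ S ∧ m ≤ W.card ∧
      ∀ e₁, e₁ ⊆ W → e₁.card = K → ∀ e₂, e₂ ⊆ W → e₂.card = K → χ e₁ = χ e₂ := by
  induction K generalizing m with
  | zero =>
    refine ⟨m, fun γ _ hγ α _ S χ hS => ⟨S, subset_rfl, hS, fun e₁ h₁ hc₁ e₂ h₂ hc₂ => ?_⟩⟩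
    rw [Finset.card_eq_zero.mp hc₁, Finset.card_eq_zero.mp hc₂]
  | succ K IH =>
    -- pre-homogeneous sequence lemma
    have pre : ∀ M : ℕ, ∃ n : ℕ, ∀ (γ : Type) [Fintype γ], Fintype.card γ ≤ r →
        ∀ (α : Type) [DecidableEq α] (S : Finset α) (χ : Finset α → γ), n ≤ S.card →
        ∃ L : List α, L.length = M ∧ L.Nodup ∧ (∀ x ∈ L, x ∈ S) ∧
          ∀ (i : ℕ) (hi : i < L.length), ∀ e₁ e₂ : Finset α,
            e₁ ⊆ (L.drop (i+1)).toFinset → e₂ ⊆ (L.drop (i+1)).toFinset →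
            e₁.card = K → e₂.card = K → χ (insert L[i] e₁) = χ (insert L[i] e₂) := by
      intro M
      induction M with
      | zero =>
        exact ⟨0, fun γ _ hγ α _ S χ hS => ⟨[], rfl, List.nodup_nil, by simp, by simp⟩⟩
      | succ M IHM =>
        obtain ⟨n₁, h₁⟩ := IHM
        obtain ⟨n₂, h₂⟩ := IH n₁
        refine ⟨n₂ + 1, fun γ _ hγ α _ S χ hS => ?_⟩
        obtain ⟨x, hx⟩ := Finset.card_pos.mp (lt_of_lt_of_le (Nat.succ_pos n₂) hS)
        have hS' : n₂ ≤ (S.erase x).card := by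
          rw [Finset.card_erase_of_mem hx]; omega
        obtain ⟨T, hTS, hTc, hTmono⟩ := h₂ γ hγ α (S.erase x) (fun e => χ (insert x e)) hS'
        obtain ⟨L', hlen, hnd, hmem, hprop⟩ := h₁ γ hγ α T χ hTc
        have hmemT : ∀ y ∈ L', y ∈ T := hmem
        have hxL : x ∉ L' := fun h => (Finset.mem_erase.mp (hTS (hmemT x h))).1 rfl
        refine ⟨x :: L', by simp [hlen], List.nodup_cons.mpr ⟨hxL, hnd⟩,
          fun y hy => ?_, ?_⟩
        · rcases List.mem_cons.mp hy with h | h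
          · exact h ▸ hx
          · exact Finset.mem_of_mem_erase (hTS (hmemT y h))
        · intro i hi e₁ e₂ he₁ he₂ hc₁ hc₂
          match i with
          | 0 =>
            simp only [List.drop_succ_cons, List.drop_zero] at he₁ he₂
            have hsub : L'.toFinset ⊆ T := fun y hy => hmemT y (List.mem_toFinset.mp hy)
            exact hTmono e₁ (he₁.trans hsub) hc₁ e₂ (he₂.trans hsub) hc₂
          | (j+1) =>
            simp only [List.drop_succ_cons, List.getElem_cons_succ] at he₁ he₂ ⊢
            exact hprop j (by simpa using hi) e₁ e₂ he₁ he₂ hc₁ hc₂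
    obtain ⟨n, hn⟩ := pre (r * m + 1)
    refine ⟨n, fun γ _ hγ α _ S χ hS => ?_⟩
    obtain ⟨L, hlen, hnd, hmem, hprop⟩ := hn γ hγ α S χ hS
    have hinj : Function.Injective L.get := List.nodup_iff_injective_get.mp hnd
    set c : Fin L.length → γ := fun i => χ (insert (L.get i) ((L.drop (i+1)).take K).toFinset) with hc
    obtain ⟨c₀, -, hc₀⟩ := Finset.exists_lt_card_fiber_of_mul_lt_card_of_maps_to
      (f := c) (s := Finset.univ) (t := Finset.univ) (fun a _ => Finset.mem_univ _)
      (by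
        have : (Finset.univ : Finset (Fin L.length)).card = r * m + 1 := by
          simp [hlen]
        rw [this, Finset.card_univ]
        calc Fintype.card γ * m ≤ r * m := Nat.mul_le_mul_right m hγ
          _ < r * m + 1 := Nat.lt_succ_self _)
    set I : Finset (Fin L.length) := Finset.univ.filter (fun i => c i = c₀) with hI
    refine ⟨I.image L.get, ?_, ?_, ?_⟩
    · intro y hy
      obtain ⟨i, -, rfl⟩ := Finset.mem_image.mp hy
      exact hmem _ (by rw [List.get_eq_getElem]; exact L.getElem_mem i.isLt)
    · rw [Finset.card_image_of_injective _ hinj]; omega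
    · have key : ∀ e, e ⊆ I.image L.get → e.card = K + 1 → χ e = c₀ := by
        intro e he hce
        set J : Finset (Fin L.length) := I.filter (fun i => L.get i ∈ e) with hJ
        have hJe : J.image L.get = e := by
          apply Finset.Subset.antisymm
          · intro y hy
            obtain ⟨i, hi, rfl⟩ := Finset.mem_image.mp hy
            exact (Finset.mem_filter.mp hi).2
          · intro y hy
            obtain ⟨i, hi, rfl⟩ := Finset.mem_image.mp (he hy)
            exact Finset.mem_image.mpr ⟨i, Finset.mem_filter.mpr ⟨hi, hy⟩, rfl⟩
        have hJc : J.card = K + 1 := by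
          rw [← hce, ← hJe, Finset.card_image_of_injective _ hinj]
        have hJne : J.Nonempty := Finset.card_pos.mp (by omega)
        set i₀ := J.min' hJne with hi₀
        have hi₀J : i₀ ∈ J := J.min'_mem hJne
        have hxe : L.get i₀ ∈ e := (Finset.mem_filter.mp hi₀J).2
        set e' := e.erase (L.get i₀) with he'
        have hce' : e'.card = K := by rw [he', Finset.card_erase_of_mem hxe, hce]; omega
        have he'sub : e' ⊆ (L.drop ((i₀ : ℕ)+1)).toFinset := by
          intro y hy
          obtain ⟨hyne, hye⟩ := Finset.mem_erase.mp hy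
          obtain ⟨j, hj, rfl⟩ := Finset.mem_image.mp (he hye)
          have hjJ : j ∈ J := Finset.mem_filter.mpr ⟨hj, hye⟩
          have : i₀ < j := lt_of_le_of_ne (J.min'_le j hjJ) (fun h => hyne (by rw [← h]))
          rw [List.mem_toFinset]
          have hlt : (j : ℕ) - ((i₀ : ℕ)+1) < (L.drop ((i₀:ℕ)+1)).length := by
            rw [List.length_drop]; omega
          have : (L.drop ((i₀:ℕ)+1))[(j:ℕ) - ((i₀:ℕ)+1)] = L[(j:ℕ)] := by
            rw [List.getElem_drop]; congr 1; omega
          rw [List.get_eq_getElem, ← this]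
          exact List.getElem_mem hlt
        have hdroplen : K ≤ (L.drop ((i₀:ℕ)+1)).length := by
          calc K = e'.card := hce'.symm
            _ ≤ (L.drop ((i₀:ℕ)+1)).toFinset.card := Finset.card_le_card he'sub
            _ ≤ (L.drop ((i₀:ℕ)+1)).length := (L.drop _).toFinset_card_le
        set C := ((L.drop ((i₀:ℕ)+1)).take K).toFinset with hC
        have hCsub : C ⊆ (L.drop ((i₀:ℕ)+1)).toFinset := by
          intro y hy
          rw [List.mem_toFinset] at hy ⊢
          exact List.mem_of_mem_take hy
        have hCc : C.card = K := by
          have hndC : ((L.drop ((i₀:ℕ)+1)).take K).Nodup :=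
            (((L.drop ((i₀:ℕ)+1)).take_sublist K).trans (L.drop_sublist _)).nodup hnd
          rw [hC, List.toFinset_card_of_nodup hndC, List.length_take]
          omega
        have hee : e = insert (L.get i₀) e' := (Finset.insert_erase hxe).symm
        have h1 : χ e = χ (insert L[(i₀:ℕ)] C) := by
          refine (congrArg χ hee).trans ?_
          exact hprop (i₀ : ℕ) i₀.isLt e' C he'sub hCsub hce' hCc
        have h2 : χ (insert L[(i₀:ℕ)] C) = c₀ := by
          have := (Finset.mem_filter.mp (Finset.mem_filter.mp hi₀J).1).2
          rw [hc] at this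
          simpa using this
        rw [h1, h2]
      intro e₁ h₁ hc₁ e₂ h₂ hc₂
      rw [key e₁ h₁ hc₁, key e₂ h₂ hc₂]

theorem myProdRamsey (γ : Type) [Fintype γ] :
    ∀ (ℓ : ℕ) (κ : Fin ℓ → ℕ) (m : ℕ), ∃ n : ℕ, ∀ (V : Type) [DecidableEq V]
      (S : Fin ℓ → Finset V) (χ : (Fin ℓ → Finset V) → γ),
      (∀ j, n ≤ (S j).card) →
      ∃ W : Fin ℓ → Finset V, (∀ j, W j ⊆ S j) ∧ (∀ j, m ≤ (W j).card) ∧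
        ∀ e₁ e₂ : Fin ℓ → Finset V,
          (∀ j, e₁ j ⊆ W j) → (∀ j, (e₁ j).card = κ j) →
          (∀ j, e₂ j ⊆ W j) → (∀ j, (e₂ j).card = κ j) → χ e₁ = χ e₂ := by
  intro ℓ
  induction ℓ with
  | zero =>
    intro κ m
    refine ⟨m, fun V _ S χ hS => ⟨S, fun j => subset_rfl, hS, fun e₁ e₂ _ _ _ _ => ?_⟩⟩
    have : e₁ = e₂ := funext fun j => j.elim0
    rw [this]
  | succ ℓ IH =>
    intro κ m
    obtain ⟨n₁, h₁⟩ := IH (fun j => κ j.succ) m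
    set r₀ := (Fintype.card γ + 1) ^ ((2 ^ n₁) ^ ℓ) with hr₀
    obtain ⟨n₂, h₂⟩ := myRamsey (κ 0) r₀ (max m (κ 0))
    refine ⟨max n₂ n₁, fun V _ S χ hS => ?_⟩
    have hT : ∀ j : Fin ℓ, ∃ T ⊆ S j.succ, T.card = n₁ :=
      fun j => Finset.exists_subset_card_eq ((le_max_right n₂ n₁).trans (hS j.succ))
    choose T hTsub hTcard using hT
    classical
    have hcardΓ : Fintype.card
        (((j : Fin ℓ) → {s : Finset V // s ∈ (T j).powersetCard (κ j.succ)}) → γ) ≤ r₀ := by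
      rw [Fintype.card_fun, Fintype.card_pi]
      have hd : ∀ j : Fin ℓ,
          Fintype.card {s : Finset V // s ∈ (T j).powersetCard (κ j.succ)} ≤ 2 ^ n₁ := by
        intro j
        rw [Fintype.card_coe]
        calc ((T j).powersetCard (κ j.succ)).card
            ≤ (T j).powerset.card := Finset.card_le_card (fun x hx =>
              Finset.mem_powerset.mpr (Finset.mem_powersetCard.mp hx).1)
          _ = 2 ^ n₁ := by rw [Finset.card_powerset, hTcard]
      calc Fintype.card γ ^ (∏ j : Fin ℓ, Fintype.card {s : Finset V // s ∈ (T j).powersetCard (κ j.succ)})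
          ≤ (Fintype.card γ + 1) ^ (∏ j : Fin ℓ, Fintype.card {s : Finset V // s ∈ (T j).powersetCard (κ j.succ)}) :=
            Nat.pow_le_pow_left (Nat.le_succ _) _
        _ ≤ (Fintype.card γ + 1) ^ ((2 ^ n₁) ^ ℓ) := by
            apply Nat.pow_le_pow_right (Nat.succ_pos _)
            calc (∏ j : Fin ℓ, Fintype.card {s : Finset V // s ∈ (T j).powersetCard (κ j.succ)})
                ≤ ∏ _j : Fin ℓ, 2 ^ n₁ := Finset.prod_le_prod' fun j _ => hd j
              _ = (2 ^ n₁) ^ ℓ := by rw [Finset.prod_const, Finset.card_univ, Fintype.card_fin]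
    set χ₀ : Finset V → (((j : Fin ℓ) → {s : Finset V // s ∈ (T j).powersetCard (κ j.succ)}) → γ) :=
      fun e₀ g => χ (Fin.cons e₀ fun j => (g j).1) with hχ₀
    obtain ⟨W₀, hW₀sub, hW₀card, mono₀⟩ :=
      h₂ _ hcardΓ V (S 0) χ₀ ((le_max_left n₂ n₁).trans (hS 0))
    obtain ⟨efix, hefixsub, hefixcard⟩ :=
      Finset.exists_subset_card_eq (s := W₀) (n := κ 0) ((le_max_right m (κ 0)).trans hW₀card)
    set χ' : (Fin ℓ → Finset V) → γ := fun es => χ (Fin.cons efix es) with hχ'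
    obtain ⟨Wr, hWrsub, hWrcard, mono'⟩ := h₁ V T χ' (fun j => (hTcard j).symm.le)
    set Wfun : Fin (ℓ+1) → Finset V := Fin.cons W₀ Wr with hWfun
    refine ⟨Wfun, ?_, ?_, ?_⟩
    · intro j
      refine Fin.cases ?_ ?_ j
      · exact hW₀sub
      · exact fun i => (hWrsub i).trans (hTsub i)
    · intro j
      refine Fin.cases ?_ ?_ j
      · exact (le_max_left m (κ 0)).trans hW₀card
      · exact hWrcard
    · have key : ∀ e : Fin (ℓ+1) → Finset V, (∀ j, e j ⊆ Wfun j) →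
          (∀ j, (e j).card = κ j) → χ e = χ' (Fin.tail e) := by
        intro e hsub hcard
        have hg : ∀ j : Fin ℓ, Fin.tail e j ∈ (T j).powersetCard (κ j.succ) := by
          intro j
          exact Finset.mem_powersetCard.mpr ⟨(hsub j.succ).trans (hWrsub j), hcard j.succ⟩
        set g : (j : Fin ℓ) → {s : Finset V // s ∈ (T j).powersetCard (κ j.succ)} :=
          fun j => ⟨Fin.tail e j, hg j⟩ with hgdef
        have h1 : χ e = χ₀ (e 0) g := by
          rw [hχ₀]
          simp only [hgdef]
          rw [show (Fin.cons (e 0) fun j => Fin.tail e j) = e from Fin.cons_self_tail e]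
        have h2 : χ₀ (e 0) = χ₀ efix :=
          mono₀ (e 0) (hsub 0) (hcard 0) efix hefixsub hefixcard
        have h3 : χ₀ efix g = χ' (Fin.tail e) := by rw [hχ₀, hχ']
        rw [h1, h2, h3]
      intro e₁ e₂ hs₁ hc₁ hs₂ hc₂
      rw [key e₁ hs₁ hc₁, key e₂ hs₂ hc₂]
      exact mono' (Fin.tail e₁) (Fin.tail e₂) (fun j => hs₁ j.succ) (fun j => hc₁ j.succ)
        (fun j => hs₂ j.succ) (fun j => hc₂ j.succ)

theorem myChain (ℓ : ℕ) (D : Type) (κ : D → Fin ℓ → ℕ) :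
    ∀ (ds : List D) (m : ℕ), ∃ n : ℕ, ∀ (V : Type) [DecidableEq V]
      (S : Fin ℓ → Finset V) (χ : D → (Fin ℓ → Finset V) → Prop),
      (∀ j, n ≤ (S j).card) →
      ∃ W : Fin ℓ → Finset V, (∀ j, W j ⊆ S j) ∧ (∀ j, m ≤ (W j).card) ∧
        ∀ d ∈ ds, ∀ e₁ e₂ : Fin ℓ → Finset V,
          (∀ j, e₁ j ⊆ W j) → (∀ j, (e₁ j).card = κ d j) →
          (∀ j, e₂ j ⊆ W j) → (∀ j, (e₂ j).card = κ d j) → χ d e₁ = χ d e₂ := by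
  intro ds
  induction ds with
  | nil =>
    intro m
    exact ⟨m, fun V _ S χ hS => ⟨S, fun j => subset_rfl, hS, fun d hd => absurd hd (by simp)⟩⟩
  | cons d ds IH =>
    intro m
    obtain ⟨n₁, h₁⟩ := IH m
    obtain ⟨n₂, h₂⟩ := myProdRamsey Prop ℓ (κ d) n₁
    refine ⟨n₂, fun V _ S χ hS => ?_⟩
    obtain ⟨W₁, hW₁sub, hW₁card, monod⟩ := h₂ V S (χ d) hS
    obtain ⟨W, hWsub, hWcard, monos⟩ := h₁ V W₁ χ hW₁card
    refine ⟨W, fun j => (hWsub j).trans (hW₁sub j), hWcard, ?_⟩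
    intro d' hd' e₁ e₂ hs₁ hc₁ hs₂ hc₂
    rcases List.mem_cons.mp hd' with rfl | hd'
    · exact monod e₁ e₂ (fun j => (hs₁ j).trans (hWsub j)) hc₁
        (fun j => (hs₂ j).trans (hWsub j)) hc₂
    · exact monos d' hd' e₁ e₂ hs₁ hc₁ hs₂ hc₂


/-- Partite Ramsey theorem for `(k₁,…,k_t)`-hypergraphs: for every `ℓ ∈ ℕ₊`, `m ∈ ℕ`, `t ∈ ℕ₊`
and arities `k : Fin t → ℕ₊`, there is `n` such that for every structure consisting of `t`
uniform hypergraphs `E i` (of arity `k i`) on a common vertex set `V` and every `f : V → Fin ℓ`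
with all fibers of size at least `n`, there are sets `Q i` of weak compositions of `k i` of
length `ℓ` and a subset `W` with all fibers of `f|_W` of size at least `m`, such that for each
`i`, a `(k i)`-subset of `W` is an `E i`-edge iff its fiber trace sizes lie in `Q i`. -/
theorem stmt4 (ℓ : ℕ) (hℓ : 0 < ℓ) (m : ℕ) (t : ℕ) (ht : 0 < t)
    (k : Fin t → ℕ) (hk : ∀ i, 0 < k i) :
    ∃ n : ℕ, ∀ (V : Type) [Fintype V] [DecidableEq V]
      (E : Fin t → Finset V → Prop) (f : V → Fin ℓ),
      (∀ j : Fin ℓ, n ≤ (Finset.univ.filter fun v => f v = j).card) →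
      ∃ (Q : Fin t → Set (Fin ℓ → ℕ)) (W : Finset V),
        (∀ i, ∀ q ∈ Q i, ∑ j, q j = k i) ∧
        (∀ j : Fin ℓ, m ≤ (W.filter fun v => f v = j).card) ∧
        (∀ i, ∀ e : Finset V, e ⊆ W → e.card = k i →
          (E i e ↔ (fun j => (e.filter fun v => f v = j).card) ∈ Q i)) := by
  classical
  set K := Finset.univ.sup k with hK
  have hkK : ∀ i, k i ≤ K := fun i => Finset.le_sup (Finset.mem_univ i)
  set D := Fin t × (Fin ℓ → Fin (K + 1)) with hD
  set κ : D → Fin ℓ → ℕ := fun d j => (d.2 j : ℕ) with hκ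
  obtain ⟨n, hn⟩ := myChain ℓ D κ (Finset.univ : Finset D).toList m
  refine ⟨n, fun V _ _ E f hfib => ?_⟩
  set P : Fin ℓ → Finset V := fun j => Finset.univ.filter fun v => f v = j with hP
  set χ : D → (Fin ℓ → Finset V) → Prop := fun d es => E d.1 (Finset.univ.biUnion es) with hχ
  obtain ⟨W, hWsub, hWcard, hmono⟩ := hn V P χ hfib
  set W' : Finset V := Finset.univ.biUnion W with hW'
  have hfW : ∀ j, ∀ x ∈ W j, f x = j := by
    intro j x hx
    exact (Finset.mem_filter.mp (hWsub j hx)).2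
  have hWW' : ∀ j, W j ⊆ W' := fun j x hx => Finset.mem_biUnion.mpr ⟨j, Finset.mem_univ j, hx⟩
  have hfiber : ∀ (e : Finset V), e ⊆ W' → ∀ j, e.filter (fun v => f v = j) ⊆ W j := by
    intro e he j x hx
    obtain ⟨hxe, hfx⟩ := Finset.mem_filter.mp hx
    obtain ⟨j', -, hxj'⟩ := Finset.mem_biUnion.mp (he hxe)
    rwa [show j = j' from hfx.symm.trans (hfW j' x hxj')]
  have hunion : ∀ (e : Finset V), Finset.univ.biUnion (fun j => e.filter fun v => f v = j) = e := by
    intro e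
    ext x
    simp only [Finset.mem_biUnion, Finset.mem_filter, Finset.mem_univ, true_and]
    exact ⟨fun ⟨j, hx, _⟩ => hx, fun hx => ⟨f x, hx, rfl⟩⟩
  set Q : Fin t → Set (Fin ℓ → ℕ) := fun i =>
    {q | ∃ e : Finset V, e ⊆ W' ∧ e.card = k i ∧
      (fun j => (e.filter fun v => f v = j).card) = q ∧ E i e} with hQ
  refine ⟨Q, W', ?_, ?_, ?_⟩
  · rintro i q ⟨e, -, hcard, rfl, -⟩
    rw [← hcard]
    exact (Finset.card_eq_sum_card_fiberwise fun x _ => Finset.mem_univ (f x)).symm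
  · intro j
    refine le_trans (hWcard j) (Finset.card_le_card ?_)
    intro x hx
    exact Finset.mem_filter.mpr ⟨hWW' j hx, hfW j x hx⟩
  · intro i e hsub hcard
    constructor
    · intro hE
      exact ⟨e, hsub, hcard, rfl, hE⟩
    · rintro ⟨e', hsub', hcard', htr, hE'⟩
      have hσlt : ∀ j, (e.filter fun v => f v = j).card < K + 1 := by
        intro j
        have h1 := Finset.card_filter_le e (fun v => f v = j)
        have h2 := hkK i
        omega

      set d : D := (i, fun j => ⟨(e.filter fun v => f v = j).card, hσlt j⟩) with hd
      have hκd : ∀ j, κ d j = (e.filter fun v => f v = j).card := fun j => rfl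
      have htr' : ∀ j, (e'.filter fun v => f v = j).card = (e.filter fun v => f v = j).card :=
        fun j => congrFun htr j
      have key := hmono d (Finset.mem_toList.mpr (Finset.mem_univ d))
        (fun j => e.filter fun v => f v = j) (fun j => e'.filter fun v => f v = j)
        (hfiber e hsub) (fun j => (hκd j).symm)
        (hfiber e' hsub') (fun j => ((hκd j).trans (htr' j).symm).symm)
      rw [hχ] at key
      simp only [hunion] at key
      rw [show E i e = E d.1 e from rfl, key]
      exact hE'
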